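/- Let (X, F) be a measurable space and μ : F → [0,∞] a monotone measure that is subadditive, i.e. μ(A ∪ B) ≤ μ(A) + μ(B) for all A, B ∈ F. Let p > 1 and q satisfy 1/p + 1/q = 1, let A ∈ F, and let f, g, h : X → [0,∞) be measurable functions. Set a = (C)∫_A g f^p dμ and b = (C)∫_A h f^p dμ, and assume 0 < a < ∞ and 0 < b < ∞. Then (C)∫_A f dμ ≤ 4^{1/p} · (1/√p + 1/√q)² · (ab)^{1/p} · ((C)∫_A (b·g + a·h)^{−(q−1)} dμ)^{1/q}, where (b·g + a·h)^{−(q−1)} denotes the function x ↦ 1/(b·g(x) + a·h(x))^{q−1} (with value ∞ where b·g(x) + a·h(x) = 0). -/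

import Mathlib

open scoped ENNReal NNReal
open MeasureTheory

/-- The Choquet integral of `k` on `A` with respect to the monotone set
function `μ`: `(C)∫_A k dμ = ∫_0^∞ μ(A ∩ {k ≥ t}) dt`. -/
noncomputable def choquet {X : Type*} (μ : Set X → ℝ≥0∞) (f : X → ℝ≥0∞)
    (A : Set X) : ℝ≥0∞ :=
  ∫⁻ t in Set.Ioi (0:ℝ), μ (A ∩ {x | ENNReal.ofReal t ≤ f x})

private lemma scale_lintegral {r : ℝ} (hr : 0 < r) (φ : ℝ → ℝ≥0∞) (hφ : Measurable φ) :
    ∫⁻ t in Set.Ioi (0:ℝ), φ (r * t) = ENNReal.ofReal r⁻¹ * ∫⁻ t in Set.Ioi (0:ℝ), φ t := by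
  have hm : Measurable fun t : ℝ => r * t := measurable_const.mul measurable_id
  have hpre : (fun t : ℝ => r * t) ⁻¹' Set.Ioi 0 = Set.Ioi 0 := by
    ext t
    simp only [Set.mem_preimage, Set.mem_Ioi]
    constructor
    · intro ht; nlinarith
    · intro ht; positivity
  have hmap : Measure.map (fun t : ℝ => r * t) (volume.restrict (Set.Ioi (0:ℝ))) =
      (ENNReal.ofReal r⁻¹) • volume.restrict (Set.Ioi (0:ℝ)) := by
    conv_lhs => rw [← hpre]
    rw [← Measure.restrict_map hm measurableSet_Ioi, Real.map_volume_mul_left hr.ne',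
      abs_of_pos (inv_pos.mpr hr), Measure.restrict_smul]
  calc ∫⁻ t in Set.Ioi (0:ℝ), φ (r * t)
      = ∫⁻ x, φ x ∂(Measure.map (fun t : ℝ => r * t) (volume.restrict (Set.Ioi (0:ℝ)))) :=
        (lintegral_map hφ hm).symm
    _ = ENNReal.ofReal r⁻¹ * ∫⁻ t in Set.Ioi (0:ℝ), φ t := by
        rw [hmap, lintegral_smul_measure, smul_eq_mul]

section ChoquetLemmas

variable {X : Type*} [MeasurableSpace X]

private lemma choquet_slice_measurable (μ : Set X → ℝ≥0∞)
    (hμmono : ∀ A B : Set X, MeasurableSet A → MeasurableSet B → A ⊆ B → μ A ≤ μ B)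
    {k : X → ℝ≥0∞} (hk : Measurable k)
    {A : Set X} (hA : MeasurableSet A) :
    Measurable fun t : ℝ => μ (A ∩ {x | ENNReal.ofReal t ≤ k x}) := by
  apply Antitone.measurable
  intro t₁ t₂ hle
  refine hμmono _ _ (hA.inter (measurableSet_le measurable_const hk))
    (hA.inter (measurableSet_le measurable_const hk)) ?_
  exact Set.inter_subset_inter_right _ fun x hx =>
    le_trans (ENNReal.ofReal_le_ofReal hle) hx

private lemma choquet_mono (μ : Set X → ℝ≥0∞)
    (hμmono : ∀ A B : Set X, MeasurableSet A → MeasurableSet B → A ⊆ B → μ A ≤ μ B)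
    {k₁ k₂ : X → ℝ≥0∞} (hk₁ : Measurable k₁) (hk₂ : Measurable k₂)
    {A : Set X} (hA : MeasurableSet A) (hle : ∀ x, k₁ x ≤ k₂ x) :
    choquet μ k₁ A ≤ choquet μ k₂ A := by
  refine lintegral_mono fun t => ?_
  exact hμmono _ _ (hA.inter (measurableSet_le measurable_const hk₁))
    (hA.inter (measurableSet_le measurable_const hk₂))
    (Set.inter_subset_inter_right _ fun x hx => le_trans hx (hle x))

private lemma choquet_const_mul (μ : Set X → ℝ≥0∞)
    (hμmono : ∀ A B : Set X, MeasurableSet A → MeasurableSet B → A ⊆ B → μ A ≤ μ B)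
    {k : X → ℝ≥0∞} (hk : Measurable k)
    {A : Set X} (hA : MeasurableSet A) {c : ℝ≥0∞} (hc0 : c ≠ 0) (hcf : c ≠ ⊤) :
    choquet μ (fun x => c * k x) A = c * choquet μ k A := by
  obtain ⟨r, hr, rfl⟩ : ∃ r : ℝ, 0 < r ∧ c = ENNReal.ofReal r :=
    ⟨c.toReal, ENNReal.toReal_pos hc0 hcf, (ENNReal.ofReal_toReal hcf).symm⟩
  have hset : ∀ t : ℝ, {x | ENNReal.ofReal t ≤ ENNReal.ofReal r * k x}
      = {x | ENNReal.ofReal (r⁻¹ * t) ≤ k x} := by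
    intro t; ext x
    simp only [Set.mem_setOf_eq]
    rw [inv_mul_eq_div, ENNReal.ofReal_div_of_pos hr,
      ENNReal.div_le_iff_le_mul (Or.inl (by simp [hr.not_ge])) (Or.inl ENNReal.ofReal_ne_top),
      mul_comm]
  unfold choquet
  simp_rw [hset]
  rw [show (fun t : ℝ => μ (A ∩ {x | ENNReal.ofReal (r⁻¹ * t) ≤ k x}))
      = (fun s : ℝ => μ (A ∩ {x | ENNReal.ofReal s ≤ k x})) ∘ (fun t => r⁻¹ * t) from rfl]
  have := scale_lintegral (inv_pos.mpr hr)
    (fun s : ℝ => μ (A ∩ {x | ENNReal.ofReal s ≤ k x}))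
    (choquet_slice_measurable μ hμmono hk hA)
  simpa [inv_inv, Function.comp_def] using this

private lemma choquet_add_le (μ : Set X → ℝ≥0∞)
    (hμmono : ∀ A B : Set X, MeasurableSet A → MeasurableSet B → A ⊆ B → μ A ≤ μ B)
    (hsubadd : ∀ A B : Set X, MeasurableSet A → MeasurableSet B →
      μ (A ∪ B) ≤ μ A + μ B)
    {u v : X → ℝ≥0∞} (hu : Measurable u) (hv : Measurable v)
    {A : Set X} (hA : MeasurableSet A) {θ : ℝ} (hθ0 : 0 < θ) (hθ1 : θ < 1) :
    choquet μ (fun x => u x + v x) A ≤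
      ENNReal.ofReal θ⁻¹ * choquet μ u A + ENNReal.ofReal (1-θ)⁻¹ * choquet μ v A := by
  have h1θ : 0 < 1 - θ := by linarith
  have huset : ∀ t : ℝ, MeasurableSet {x | ENNReal.ofReal t ≤ u x} := fun t =>
    measurableSet_le measurable_const hu
  have hvset : ∀ t : ℝ, MeasurableSet {x | ENNReal.ofReal t ≤ v x} := fun t =>
    measurableSet_le measurable_const hv
  have key : ∀ t : ℝ, μ (A ∩ {x | ENNReal.ofReal t ≤ u x + v x}) ≤
      μ (A ∩ {x | ENNReal.ofReal (θ * t) ≤ u x})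
        + μ (A ∩ {x | ENNReal.ofReal ((1-θ) * t) ≤ v x}) := by
    intro t
    have hsub : A ∩ {x | ENNReal.ofReal t ≤ u x + v x} ⊆
        (A ∩ {x | ENNReal.ofReal (θ * t) ≤ u x})
          ∪ (A ∩ {x | ENNReal.ofReal ((1-θ) * t) ≤ v x}) := by
      rintro x ⟨hxA, hx⟩
      simp only [Set.mem_setOf_eq] at hx
      rcases le_or_gt (ENNReal.ofReal (θ * t)) (u x) with hcase | hcase
      · exact Or.inl ⟨hxA, hcase⟩
      · refine Or.inr ⟨hxA, ?_⟩
        simp only [Set.mem_setOf_eq]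
        by_contra hcon
        push_neg at hcon
        have ht : 0 ≤ t := by
          by_contra ht
          push_neg at ht
          rw [ENNReal.ofReal_of_nonpos (by nlinarith)] at hcase
          exact (not_lt_of_ge zero_le) hcase
        have hlt := ENNReal.add_lt_add hcase hcon
        rw [← ENNReal.ofReal_add (by positivity) (by positivity)] at hlt
        have heq : θ * t + (1 - θ) * t = t := by ring
        rw [heq] at hlt
        exact absurd hx (not_le.mpr hlt)
    refine le_trans (hμmono _ _ (hA.inter (measurableSet_le measurable_const (hu.add hv)))
      (((hA.inter (huset _))).union (hA.inter (hvset _))) hsub) ?_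
    exact hsubadd _ _ (hA.inter (huset _)) (hA.inter (hvset _))
  unfold choquet
  have hmu : Measurable fun t : ℝ => μ (A ∩ {x | ENNReal.ofReal (θ * t) ≤ u x}) :=
    (choquet_slice_measurable μ hμmono hu hA).comp (measurable_const.mul measurable_id)
  calc ∫⁻ t in Set.Ioi (0:ℝ), μ (A ∩ {x | ENNReal.ofReal t ≤ u x + v x})
      ≤ ∫⁻ t in Set.Ioi (0:ℝ), (μ (A ∩ {x | ENNReal.ofReal (θ * t) ≤ u x})
          + μ (A ∩ {x | ENNReal.ofReal ((1-θ) * t) ≤ v x})) := lintegral_mono key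
    _ = (∫⁻ t in Set.Ioi (0:ℝ), μ (A ∩ {x | ENNReal.ofReal (θ * t) ≤ u x}))
          + ∫⁻ t in Set.Ioi (0:ℝ), μ (A ∩ {x | ENNReal.ofReal ((1-θ) * t) ≤ v x}) :=
        lintegral_add_left hmu _
    _ = ENNReal.ofReal θ⁻¹ * choquet μ u A + ENNReal.ofReal (1-θ)⁻¹ * choquet μ v A := by
        rw [scale_lintegral hθ0 _ (choquet_slice_measurable μ hμmono hu hA),
          scale_lintegral h1θ _ (choquet_slice_measurable μ hμmono hv hA)]
        rfl

end ChoquetLemmas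

private lemma carlson_real_core {p q s t : ℝ} (hp : 1 < p) (hq : 1 < q)
    (hpq : 1/p + 1/q = 1) (hs : 0 < s) (ht : 0 < t) :
    (Real.sqrt q / (Real.sqrt p + Real.sqrt q))⁻¹ * (((t/s) ^ (1/(p*q))) ^ p / p * s)
      + (1 - Real.sqrt q / (Real.sqrt p + Real.sqrt q))⁻¹ * (((t/s) ^ (1/(p*q))) ^ (-q) / q * t)
    ≤ (1 / Real.sqrt p + 1 / Real.sqrt q) ^ 2 * (s ^ (1/p) * t ^ (1/q)) := by
  have hp0 : 0 < p := lt_trans one_pos hp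
  have hq0 : 0 < q := lt_trans one_pos hq
  have hts : 0 < t/s := div_pos ht hs
  have hsp : 0 < Real.sqrt p := Real.sqrt_pos.mpr hp0
  have hsq : 0 < Real.sqrt q := Real.sqrt_pos.mpr hq0
  set sp := Real.sqrt p with hspdef
  set sq := Real.sqrt q with hsqdef
  have hp2 : sp ^ 2 = p := Real.sq_sqrt hp0.le
  have hq2 : sq ^ 2 = q := Real.sq_sqrt hq0.le
  have hsum : 0 < sp + sq := by linarith
  set θ := sq / (sp + sq) with hθdef
  have hθ0 : 0 < θ := div_pos hsq hsum
  have h1θ : 1 - θ = sp / (sp + sq) := by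
    rw [hθdef]; field_simp; ring
  set l := (t/s) ^ (1/(p*q)) with hldef
  set M := s ^ (1/p) * t ^ (1/q) with hMdef
  have hsrq : s ^ (1/q) ≠ 0 := ne_of_gt (Real.rpow_pos_of_pos hs _)
  have htrp : t ^ (1/p) ≠ 0 := ne_of_gt (Real.rpow_pos_of_pos ht _)
  have hss : s ^ (1/p) * s ^ (1/q) = s := by
    rw [← Real.rpow_add hs, hpq, Real.rpow_one]
  have htt : t ^ (1/p) * t ^ (1/q) = t := by
    rw [← Real.rpow_add ht, hpq, Real.rpow_one]
  have e1 : l ^ p * s = M := by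
    rw [hldef, ← Real.rpow_mul hts.le,
      show 1/(p*q)*p = 1/q by field_simp,
      Real.div_rpow ht.le hs.le, hMdef]
    field_simp
    linear_combination (-1 : ℝ) * hss
  have e2 : l ^ (-q) * t = M := by
    rw [hldef, ← Real.rpow_mul hts.le,
      show 1/(p*q)*(-q) = -(1/p) by field_simp,
      Real.rpow_neg hts.le, Real.div_rpow ht.le hs.le, hMdef]
    field_simp
    linear_combination (-1 : ℝ) * htt
  have hθinv : θ⁻¹ = (sp + sq) / sq := by rw [hθdef, inv_div]
  have hconst : θ⁻¹ / p + (1-θ)⁻¹ / q = (1/sp + 1/sq)^2 := by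
    rw [hθinv, h1θ, inv_div, ← hp2, ← hq2]
    field_simp
    ring
  have hfinal : θ⁻¹ * (l ^ p / p * s) + (1-θ)⁻¹ * (l ^ (-q) / q * t)
      = (1/sp + 1/sq)^2 * M := by
    calc θ⁻¹ * (l ^ p / p * s) + (1-θ)⁻¹ * (l ^ (-q) / q * t)
        = θ⁻¹ / p * (l ^ p * s) + (1-θ)⁻¹ / q * (l ^ (-q) * t) := by ring
      _ = (θ⁻¹ / p + (1-θ)⁻¹ / q) * M := by rw [e1, e2]; ring
      _ = (1/sp + 1/sq)^2 * M := by rw [hconst]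
  exact le_of_eq hfinal

/-- Carlson type inequality for the Choquet integral with respect to a
subadditive monotone measure:
`(C)∫_A f dμ ≤ 4^{1/p} (1/√p + 1/√q)² (ab)^{1/p}
((C)∫_A (bg + ah)^{−(q−1)} dμ)^{1/q}`
where `a = (C)∫_A g f^p dμ` and `b = (C)∫_A h f^p dμ`. -/
theorem carlson_choquet_subadditive {X : Type*} [MeasurableSpace X]
    -- μ : F → [0,∞] is a subadditive monotone measure
    (μ : Set X → ℝ≥0∞)
    (hμ0 : μ ∅ = 0) (hμX : 0 < μ Set.univ)
    (hμmono : ∀ A B : Set X, MeasurableSet A → MeasurableSet B → A ⊆ B → μ A ≤ μ B)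
    (hsubadd : ∀ A B : Set X, MeasurableSet A → MeasurableSet B →
      μ (A ∪ B) ≤ μ A + μ B)
    -- p > 1, 1/p + 1/q = 1
    (p q : ℝ) (hp : 1 < p) (hpq : 1/p + 1/q = 1)
    (A : Set X) (hA : MeasurableSet A)
    -- f, g, h : X → [0,∞) measurable
    (f g h : X → ℝ≥0) (hf : Measurable f) (hg : Measurable g) (hh : Measurable h)
    -- a = (C)∫_A g f^p dμ, b = (C)∫_A h f^p dμ, with 0 < a < ∞ and 0 < b < ∞
    (a b : ℝ≥0∞)
    (ha : a = choquet μ (fun x => (g x : ℝ≥0∞) * (f x : ℝ≥0∞) ^ p) A)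
    (hb : b = choquet μ (fun x => (h x : ℝ≥0∞) * (f x : ℝ≥0∞) ^ p) A)
    (ha0 : 0 < a) (haf : a < ∞) (hb0 : 0 < b) (hbf : b < ∞) :
    choquet μ (fun x => (f x : ℝ≥0∞)) A ≤
      (4 : ℝ≥0∞) ^ (1/p) *
        ENNReal.ofReal ((1 / Real.sqrt p + 1 / Real.sqrt q) ^ 2) *
        (a * b) ^ (1/p) *
        (choquet μ (fun x => (b * (g x : ℝ≥0∞) + a * (h x : ℝ≥0∞)) ^ (-(q-1))) A)
          ^ (1/q) := by
  have hpq' : p.HolderConjugate q := Real.holderConjugate_iff.mpr ⟨hp, by rw [← one_div, ← one_div]; exact hpq⟩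
  have hp0 : 0 < p := hpq'.pos
  have hq1 : 1 < q := hpq'.symm.lt
  have hq0 : 0 < q := hpq'.symm.pos
  have hqp : q / p = q - 1 := Real.HolderConjugate.div_conj_eq_sub_one (Real.HolderConjugate.symm hpq')
  have hq10 : 0 < q - 1 := by linarith
  set w : X → ℝ≥0∞ := fun x => b * (g x : ℝ≥0∞) + a * (h x : ℝ≥0∞) with hw
  have hw_meas : Measurable w := by
    rw [hw]
    exact (measurable_const.mul hg.coe_nnreal_ennreal).add
      (measurable_const.mul hh.coe_nnreal_ennreal)
  have hw_ne_top : ∀ x, w x ≠ ⊤ := by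
    intro x
    rw [hw]
    exact ENNReal.add_ne_top.mpr ⟨ENNReal.mul_ne_top hbf.ne ENNReal.coe_ne_top,
      ENNReal.mul_ne_top haf.ne ENNReal.coe_ne_top⟩
  rw [show (fun x => (b * (g x : ℝ≥0∞) + a * (h x : ℝ≥0∞)) ^ (-(q-1)))
      = fun x => w x ^ (-(q-1)) from rfl]
  set T := choquet μ (fun x => w x ^ (-(q-1))) A with hTdef
  have hfe : Measurable fun x => (f x : ℝ≥0∞) := hf.coe_nnreal_ennreal
  have hfp : Measurable fun x => (f x : ℝ≥0∞) ^ p :=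
    ENNReal.continuous_rpow_const.measurable.comp hfe
  have hwq : Measurable fun x => w x ^ (-(q-1)) :=
    ENNReal.continuous_rpow_const.measurable.comp hw_meas
  have hfpw : Measurable fun x => (f x : ℝ≥0∞) ^ p * w x := hfp.mul hw_meas
  have hsp : 0 < Real.sqrt p := Real.sqrt_pos.mpr hp0
  have hsq : 0 < Real.sqrt q := Real.sqrt_pos.mpr hq0
  set θ := Real.sqrt q / (Real.sqrt p + Real.sqrt q) with hθdef
  have hθ0 : 0 < θ := div_pos hsq (by linarith)
  have hθ1 : θ < 1 := by
    rw [hθdef, div_lt_one (by linarith)]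
    linarith
  -- the product `f^p * w` has Choquet integral at most `4ab`
  have hS : choquet μ (fun x => (f x : ℝ≥0∞) ^ p * w x) A ≤ 4 * a * b := by
    have hfun : (fun x => (f x : ℝ≥0∞) ^ p * w x)
        = fun x => b * ((g x : ℝ≥0∞) * (f x : ℝ≥0∞) ^ p)
            + a * ((h x : ℝ≥0∞) * (f x : ℝ≥0∞) ^ p) := by
      funext x
      rw [hw]
      ring
    rw [hfun]
    have hu : Measurable fun x => (g x : ℝ≥0∞) * (f x : ℝ≥0∞) ^ p :=
      hg.coe_nnreal_ennreal.mul hfp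
    have hv : Measurable fun x => (h x : ℝ≥0∞) * (f x : ℝ≥0∞) ^ p :=
      hh.coe_nnreal_ennreal.mul hfp
    have hsplit := choquet_add_le μ hμmono hsubadd (hu.const_mul b) (hv.const_mul a) hA
      (θ := 1/2) (by norm_num) (by norm_num)
    rw [choquet_const_mul μ hμmono hu hA hb0.ne' hbf.ne,
      choquet_const_mul μ hμmono hv hA ha0.ne' haf.ne, ← ha, ← hb] at hsplit
    refine le_trans hsplit (le_of_eq ?_)
    norm_num
    ring
  -- the key inequality, for every positive `l`
  have key : ∀ l : ℝ, 0 < l →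
      choquet μ (fun x => (f x : ℝ≥0∞)) A ≤
        ENNReal.ofReal θ⁻¹ * (ENNReal.ofReal (l ^ p / p) * (4 * a * b)) +
        ENNReal.ofReal (1-θ)⁻¹ * (ENNReal.ofReal (l ^ (-q) / q) * T) := by
    intro l hl
    have hΛp0 : ENNReal.ofReal (l ^ p / p) ≠ 0 := by
      rw [Ne, ENNReal.ofReal_eq_zero, not_le]
      positivity
    have hΛpt : ENNReal.ofReal (l ^ p / p) ≠ ⊤ := ENNReal.ofReal_ne_top
    have hΛq0 : ENNReal.ofReal (l ^ (-q) / q) ≠ 0 := by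
      rw [Ne, ENNReal.ofReal_eq_zero, not_le]
      positivity
    have hΛqt : ENNReal.ofReal (l ^ (-q) / q) ≠ ⊤ := ENNReal.ofReal_ne_top
    have hpt : ∀ x, (f x : ℝ≥0∞) ≤
        ENNReal.ofReal (l ^ p / p) * ((f x : ℝ≥0∞) ^ p * w x)
          + ENNReal.ofReal (l ^ (-q) / q) * (w x ^ (-(q-1))) := by
      intro x
      by_cases hwx : w x = 0
      · have htop : ENNReal.ofReal (l ^ (-q) / q) * (w x ^ (-(q-1))) = ⊤ := by
          rw [hwx, ENNReal.zero_rpow_of_neg (by linarith), ENNReal.mul_top hΛq0]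
        rw [htop, add_top]
        exact le_top
      · have hwt : w x ≠ ⊤ := hw_ne_top x
        have hΛ0 : ENNReal.ofReal l ≠ 0 := by
          rw [Ne, ENNReal.ofReal_eq_zero, not_le]; exact hl
        have hΛt : ENNReal.ofReal l ≠ ⊤ := ENNReal.ofReal_ne_top
        have hW0 : w x ^ (1/p) ≠ 0 := by
          simp [ENNReal.rpow_eq_zero_iff, hwx, hwt]
        have hWt : w x ^ (1/p) ≠ ⊤ := by
          simp [ENNReal.rpow_eq_top_iff, hwx, hwt]
        have young := ENNReal.young_inequality
          (ENNReal.ofReal l * (f x : ℝ≥0∞) * w x ^ (1/p))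
          ((ENNReal.ofReal l)⁻¹ * (w x ^ (1/p))⁻¹) hpq'
        have hlhs : (ENNReal.ofReal l * (f x : ℝ≥0∞) * w x ^ (1/p)) *
            ((ENNReal.ofReal l)⁻¹ * (w x ^ (1/p))⁻¹) = (f x : ℝ≥0∞) := by
          calc (ENNReal.ofReal l * (f x : ℝ≥0∞) * w x ^ (1/p)) *
              ((ENNReal.ofReal l)⁻¹ * (w x ^ (1/p))⁻¹)
              = (ENNReal.ofReal l * (ENNReal.ofReal l)⁻¹) *
                ((w x ^ (1/p)) * (w x ^ (1/p))⁻¹) * (f x : ℝ≥0∞) := by ring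
            _ = (f x : ℝ≥0∞) := by
                rw [ENNReal.mul_inv_cancel hΛ0 hΛt, ENNReal.mul_inv_cancel hW0 hWt,
                  one_mul, one_mul]
        have ht1 : (ENNReal.ofReal l * (f x : ℝ≥0∞) * w x ^ (1/p)) ^ p / ENNReal.ofReal p
            = ENNReal.ofReal (l ^ p / p) * ((f x : ℝ≥0∞) ^ p * w x) := by
          rw [ENNReal.mul_rpow_of_nonneg _ _ hp0.le, ENNReal.mul_rpow_of_nonneg _ _ hp0.le,
            ← ENNReal.rpow_mul, one_div_mul_cancel hp0.ne', ENNReal.rpow_one,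
            ENNReal.ofReal_rpow_of_pos hl, ENNReal.ofReal_div_of_pos hp0,
            div_eq_mul_inv, div_eq_mul_inv]
          ring
        have ht2 : ((ENNReal.ofReal l)⁻¹ * (w x ^ (1/p))⁻¹) ^ q / ENNReal.ofReal q
            = ENNReal.ofReal (l ^ (-q) / q) * (w x ^ (-(q-1))) := by
          rw [ENNReal.mul_rpow_of_nonneg _ _ hq0.le, ENNReal.inv_rpow, ENNReal.inv_rpow,
            ← ENNReal.rpow_mul, show 1/p*q = q - 1 by rw [← hqp]; ring,
            ← ENNReal.rpow_neg (ENNReal.ofReal l) q, ← ENNReal.rpow_neg (w x) (q-1),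
            ENNReal.ofReal_rpow_of_pos hl, ENNReal.ofReal_div_of_pos hq0,
            div_eq_mul_inv, div_eq_mul_inv]
          ring
        calc (f x : ℝ≥0∞)
            = (ENNReal.ofReal l * (f x : ℝ≥0∞) * w x ^ (1/p)) *
              ((ENNReal.ofReal l)⁻¹ * (w x ^ (1/p))⁻¹) := hlhs.symm
          _ ≤ (ENNReal.ofReal l * (f x : ℝ≥0∞) * w x ^ (1/p)) ^ p / ENNReal.ofReal p
              + ((ENNReal.ofReal l)⁻¹ * (w x ^ (1/p))⁻¹) ^ q / ENNReal.ofReal q := young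
          _ = ENNReal.ofReal (l ^ p / p) * ((f x : ℝ≥0∞) ^ p * w x)
              + ENNReal.ofReal (l ^ (-q) / q) * (w x ^ (-(q-1))) := by rw [ht1, ht2]
    have step1 : choquet μ (fun x => (f x : ℝ≥0∞)) A ≤
        choquet μ (fun x => ENNReal.ofReal (l ^ p / p) * ((f x : ℝ≥0∞) ^ p * w x)
          + ENNReal.ofReal (l ^ (-q) / q) * (w x ^ (-(q-1)))) A :=
      choquet_mono μ hμmono hfe ((hfpw.const_mul _).add (hwq.const_mul _)) hA hpt
    have step2 := choquet_add_le μ hμmono hsubadd (hfpw.const_mul (ENNReal.ofReal (l ^ p / p)))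
      (hwq.const_mul (ENNReal.ofReal (l ^ (-q) / q))) hA hθ0 hθ1
    rw [choquet_const_mul μ hμmono hfpw hA hΛp0 hΛpt,
      choquet_const_mul μ hμmono hwq hA hΛq0 hΛqt] at step2
    refine le_trans step1 (le_trans step2 ?_)
    rw [← hTdef]
    exact add_le_add (mul_le_mul_right (mul_le_mul_right hS _) _) le_rfl
  -- now split on the value of T
  rcases eq_top_or_lt_top T with hT | hTlt
  · -- T = ⊤ : right-hand side is infinite
    have h4 : ((4:ℝ≥0∞)) ^ (1/p) ≠ 0 := by
      simp [ENNReal.rpow_eq_zero_iff]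
    have hc2 : ENNReal.ofReal ((1 / Real.sqrt p + 1 / Real.sqrt q) ^ 2) ≠ 0 := by
      rw [Ne, ENNReal.ofReal_eq_zero, not_le]
      positivity
    have habt' : a * b ≠ ⊤ := ENNReal.mul_ne_top haf.ne hbf.ne
    have hab : (a * b) ^ (1/p) ≠ 0 := by
      simp [ENNReal.rpow_eq_zero_iff, ha0.ne', hb0.ne', habt']
    rw [hT, ENNReal.top_rpow_of_pos (by positivity), ENNReal.mul_top
      (mul_ne_zero (mul_ne_zero h4 hc2) hab)]
    exact le_top
  · rcases eq_or_ne T 0 with hT0 | hTne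
    · -- T = 0 : left-hand side must vanish
      have bound : ∀ l : ℝ, 0 < l → choquet μ (fun x => (f x : ℝ≥0∞)) A ≤
          ENNReal.ofReal θ⁻¹ * (ENNReal.ofReal (l ^ p / p) * (4 * a * b)) := by
        intro l hl
        have := key l hl
        rwa [hT0, mul_zero, mul_zero, add_zero] at this
      have habt : (4 : ℝ≥0∞) * a * b ≠ ⊤ :=
        ENNReal.mul_ne_top (ENNReal.mul_ne_top (by simp) haf.ne) hbf.ne
      have h1 : Filter.Tendsto (fun l : ℝ => l ^ p / p)
          (nhdsWithin 0 (Set.Ioi 0)) (nhds 0) := by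
        have hc : Filter.Tendsto (fun l : ℝ => l ^ p) (nhdsWithin 0 (Set.Ioi 0)) (nhds 0) := by
          have := (Real.continuousAt_rpow_const 0 p (Or.inr hp0.le)).continuousWithinAt
            (s := Set.Ioi (0:ℝ))
          simpa [Real.zero_rpow hp0.ne', ContinuousWithinAt] using this
        simpa using hc.div_const p
      have h2 : Filter.Tendsto (fun l : ℝ => ENNReal.ofReal (l ^ p / p))
          (nhdsWithin 0 (Set.Ioi 0)) (nhds 0) := by
        simpa [Function.comp_def] using (ENNReal.continuous_ofReal.tendsto 0).comp h1
      have h3 : Filter.Tendsto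
          (fun l : ℝ => ENNReal.ofReal θ⁻¹ * (ENNReal.ofReal (l ^ p / p) * (4 * a * b)))
          (nhdsWithin 0 (Set.Ioi 0)) (nhds 0) := by
        have hm := ENNReal.Tendsto.mul_const h2 (Or.inr habt)
        have hm2 := ENNReal.Tendsto.const_mul (a := ENNReal.ofReal θ⁻¹) hm
          (Or.inr ENNReal.ofReal_ne_top)
        simpa using hm2
      have hzero : choquet μ (fun x => (f x : ℝ≥0∞)) A ≤ 0 := by
        refine ge_of_tendsto h3 ?_
        filter_upwards [self_mem_nhdsWithin] with l hl
        exact bound l hl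
      rw [le_zero_iff] at hzero
      rw [hzero]
      exact zero_le
    · -- 0 < T < ⊤ : the main case
      have hT0 : 0 < T := hTne.bot_lt
      set sa := a.toReal with hsadef
      set sb := b.toReal with hsbdef
      set st := T.toReal with hstdef
      have hsa0 : 0 < sa := ENNReal.toReal_pos ha0.ne' haf.ne
      have hsb0 : 0 < sb := ENNReal.toReal_pos hb0.ne' hbf.ne
      have hst0 : 0 < st := ENNReal.toReal_pos hTne hTlt.ne
      have hae : a = ENNReal.ofReal sa := (ENNReal.ofReal_toReal haf.ne).symm
      have hbe : b = ENNReal.ofReal sb := (ENNReal.ofReal_toReal hbf.ne).symm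
      have hTe : T = ENNReal.ofReal st := (ENNReal.ofReal_toReal hTlt.ne).symm
      set s := 4 * sa * sb with hsdef
      have hs0 : 0 < s := by positivity
      set l := (st / s) ^ (1/(p*q)) with hldef
      have hl : 0 < l := Real.rpow_pos_of_pos (div_pos hst0 hs0) _
      refine le_trans (key l hl) ?_
      have h4ab : (4:ℝ≥0∞) * a * b = ENNReal.ofReal s := by
        rw [hae, hbe, hsdef, ENNReal.ofReal_mul (by positivity),
          ENNReal.ofReal_mul (by norm_num), ENNReal.ofReal_ofNat]
      have hθi : (0:ℝ) ≤ θ⁻¹ := inv_nonneg.mpr hθ0.le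
      have h1θi : (0:ℝ) ≤ (1-θ)⁻¹ := inv_nonneg.mpr (by linarith)
      have hlp : (0:ℝ) ≤ l ^ p / p := div_nonneg (Real.rpow_nonneg hl.le _) hp0.le
      have hlq : (0:ℝ) ≤ l ^ (-q) / q := div_nonneg (Real.rpow_nonneg hl.le _) hq0.le
      have hterm1 : ENNReal.ofReal θ⁻¹ * (ENNReal.ofReal (l ^ p / p) * ENNReal.ofReal s)
          = ENNReal.ofReal (θ⁻¹ * (l ^ p / p * s)) := by
        rw [ENNReal.ofReal_mul hθi, ENNReal.ofReal_mul hlp]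
      have hterm2 : ENNReal.ofReal (1-θ)⁻¹ * (ENNReal.ofReal (l ^ (-q) / q) * ENNReal.ofReal st)
          = ENNReal.ofReal ((1-θ)⁻¹ * (l ^ (-q) / q * st)) := by
        rw [ENNReal.ofReal_mul h1θi, ENNReal.ofReal_mul hlq]
      have hab2 : a * b = ENNReal.ofReal (sa * sb) := by
        rw [hae, hbe, ENNReal.ofReal_mul hsa0.le]
      have h4r : ((4:ℝ≥0∞)) ^ (1/p) = ENNReal.ofReal ((4:ℝ) ^ (1/p)) := by
        rw [show ((4:ℝ≥0∞)) = ENNReal.ofReal (4:ℝ) from (ENNReal.ofReal_ofNat 4).symm,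
          ENNReal.ofReal_rpow_of_pos (by norm_num)]
      have habr : (a*b) ^ (1/p) = ENNReal.ofReal ((sa*sb) ^ (1/p)) := by
        rw [hab2, ENNReal.ofReal_rpow_of_pos (mul_pos hsa0 hsb0)]
      have hTr : (ENNReal.ofReal st) ^ (1/q) = ENNReal.ofReal (st ^ (1/q)) :=
        ENNReal.ofReal_rpow_of_pos hst0
      rw [h4ab, hTe, hterm1, hterm2,
        ← ENNReal.ofReal_add (mul_nonneg hθi (mul_nonneg hlp hs0.le))
          (mul_nonneg h1θi (mul_nonneg hlq hst0.le)),
        h4r, habr, hTr,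
        ← ENNReal.ofReal_mul (Real.rpow_nonneg (by norm_num) _),
        ← ENNReal.ofReal_mul (mul_nonneg (Real.rpow_nonneg (by norm_num) _) (by positivity)),
        ← ENNReal.ofReal_mul (by positivity)]
      refine ENNReal.ofReal_le_ofReal ?_
      calc θ⁻¹ * (l ^ p / p * s) + (1-θ)⁻¹ * (l ^ (-q) / q * st)
          ≤ (1 / Real.sqrt p + 1 / Real.sqrt q) ^ 2 * (s ^ (1/p) * st ^ (1/q)) :=
            carlson_real_core hp hq1 hpq hs0 hst0
        _ = (4:ℝ) ^ (1/p) * (1 / Real.sqrt p + 1 / Real.sqrt q) ^ 2 *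
              ((sa*sb) ^ (1/p)) * st ^ (1/q) := by
            rw [hsdef, show (4:ℝ) * sa * sb = 4 * (sa * sb) by ring,
              Real.mul_rpow (by norm_num) (mul_pos hsa0 hsb0).le]
            ring
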